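/- If T : X → X is an (a,b,α)-enriched interpolative Kannan type operator on a normed space X with b > 0, then setting λ = 1/(b+1), the averaged operator T_λ = (1-λ)I + λT satisfies ‖T_λ x − T_λ y‖ ≤ a · ‖x − T_λ x‖^α · ‖y − T_λ y‖^(1−α) for all x, y ∈ X. -/

import Mathlib

open Filter Topology

theorem enriched_interpolative_averaged_contraction
    {E : Type*} [NormedAddCommGroup E] [NormedSpace ℝ E]
    (T : E → E) (a b α : ℝ) (hb : 0 < b) (ha0 : 0 ≤ a) (ha1 : a < 1)
    (hα0 : 0 < α) (hα1 : α < 1)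
    (hT : ∀ x y : E, ‖b • (x - y) + (T x - T y)‖ ≤
      a * ‖x - T x‖ ^ α * ‖y - T y‖ ^ (1 - α)) :
    ∀ x y : E,
      ‖((1 - (1 / (b + 1))) • x + (1 / (b + 1)) • T x) -
        ((1 - (1 / (b + 1))) • y + (1 / (b + 1)) • T y)‖ ≤
      a * ‖x - ((1 - (1 / (b + 1))) • x + (1 / (b + 1)) • T x)‖ ^ α *
        ‖y - ((1 - (1 / (b + 1))) • y + (1 / (b + 1)) • T y)‖ ^ (1 - α) := by
  intro x y
  set l : ℝ := 1 / (b + 1) with hl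
  have hb1 : (0:ℝ) < b + 1 := by linarith
  have hlpos : 0 < l := by positivity
  have hkey : (1:ℝ) - l = l * b := by
    rw [hl, div_mul_eq_mul_div, one_mul, eq_div_iff hb1.ne', sub_mul, one_div_mul_cancel hb1.ne']; ring
  have h1 : ((1 - l) • x + l • T x) - ((1 - l) • y + l • T y)
      = l • (b • (x - y) + (T x - T y)) := by
    rw [hkey]; module
  have h2 : x - ((1 - l) • x + l • T x) = l • (x - T x) := by module
  have h3 : y - ((1 - l) • y + l • T y) = l • (y - T y) := by module
  rw [h1, h2, h3, norm_smul, norm_smul, norm_smul]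
  simp only [Real.norm_eq_abs, abs_of_pos hlpos]
  rw [Real.mul_rpow hlpos.le (norm_nonneg _), Real.mul_rpow hlpos.le (norm_nonneg _)]
  have hfold : a * (l ^ α * ‖x - T x‖ ^ α) * (l ^ (1 - α) * ‖y - T y‖ ^ (1 - α))
      = l * (a * ‖x - T x‖ ^ α * ‖y - T y‖ ^ (1 - α)) := by
    have hll : l ^ α * l ^ (1 - α) = l := by
      rw [← Real.rpow_add hlpos]; simp
    linear_combination (a * ‖x - T x‖ ^ α * ‖y - T y‖ ^ (1 - α)) * hll
  calc l * ‖b • (x - y) + (T x - T y)‖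
      ≤ l * (a * ‖x - T x‖ ^ α * ‖y - T y‖ ^ (1 - α)) := by
        exact mul_le_mul_of_nonneg_left (hT x y) hlpos.le
    _ = a * (l ^ α * ‖x - T x‖ ^ α) * (l ^ (1 - α) * ‖y - T y‖ ^ (1 - α)) := hfold.symm
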